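/- arXiv:2205.00430 — 2 statements merged into one kernel-verified Lean document; each statement's English description precedes it below -/
import Mathlib

section
/- Let p, q be relatively prime positive integers, let S²_{p,q} = S³_{p,q}/S¹ be the orbit space of the S¹-action e^{2πiθ}·(z,w) = (e^{2πipθ}z, e^{2πiqθ}w) with the quotient topology, and let U_N = {[z:w] ∈ S²_{p,q} : z ≠ 0}. The group Γ_{1/p} = {e^{2πik/p} : k ∈ ℤ} acts on B(p) = {w ∈ ℂ : |w|² < p} by complex multiplication, and the map B(p)/Γ_{1/p} → U_N sending the class [w] to the orbit [√(q − (q/p)|w|²) : w] is well defined and is a homeomorphism, where B(p)/Γ_{1/p} carries the quotient topology and U_N the subspace topology. -/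
open Complex

/-- `expc x = e^{2πix}`. -/
noncomputable def expc (x : ℝ) : ℂ := Complex.exp (2 * Real.pi * Complex.I * x)

/-- The ellipsoid `S³_{p,q} = {(z,w) ∈ ℂ² : p|z|² + q|w|² = pq}`. -/
def ellipsoid (p q : ℕ) : Set (ℂ × ℂ) :=
  {z | (p : ℝ) * ‖z.1‖ ^ 2 + (q : ℝ) * ‖z.2‖ ^ 2 = (p : ℝ) * (q : ℝ)}

/-- Orbit relation of the `S¹`-action `e^{2πiθ}·(z,w) = (e^{2πipθ}z, e^{2πiqθ}w)` on the
ellipsoid `S³_{p,q}`. -/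
noncomputable def orbitRel (p q : ℕ) (x y : ellipsoid p q) : Prop :=
  ∃ θ : ℝ, (y : ℂ × ℂ) =
    (expc ((p : ℝ) * θ) * (x : ℂ × ℂ).1, expc ((q : ℝ) * θ) * (x : ℂ × ℂ).2)

/-- The ball `B(p) = {w ∈ ℂ : |w|² < p}`. -/
def ball' (p : ℕ) : Set ℂ := {w | ‖w‖ ^ 2 < (p : ℝ)}

/-- Orbit relation of the action of `Γ_{1/p} = {e^{2πik/p} : k ∈ ℤ}` on `B(p)` by complex
multiplication. -/
noncomputable def ballRel (p : ℕ) (x y : ball' p) : Prop :=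
  ∃ k : ℤ, (y : ℂ) = expc ((k : ℝ) / (p : ℝ)) * (x : ℂ)

/-- `U_N = {[z:w] ∈ S²_{p,q} : z ≠ 0}`. -/
noncomputable def UN (p q : ℕ) : Set (Quot (orbitRel p q)) :=
  {o | ∃ x : ellipsoid p q, Quot.mk (orbitRel p q) x = o ∧ (x : ℂ × ℂ).1 ≠ 0}

namespace OrbisphereN

/-! ### Basic lemmas about `expc` -/

lemma expc_add (a b : ℝ) : expc (a + b) = expc a * expc b := by
  rw [expc, expc, expc, ← Complex.exp_add]
  congr 1
  push_cast
  ring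

lemma expc_zero : expc 0 = 1 := by simp [expc]

lemma expc_ne_zero (x : ℝ) : expc x ≠ 0 := Complex.exp_ne_zero _

lemma expc_eq (x : ℝ) : expc x = Complex.exp ((2 * Real.pi * x : ℝ) * Complex.I) := by
  rw [expc]; congr 1; push_cast; ring

lemma abs_expc (x : ℝ) : ‖(expc x)‖ = 1 := by
  rw [expc_eq]; exact Complex.norm_exp_ofReal_mul_I _

lemma abs_expc_mul (t : ℝ) (w : ℂ) : ‖(expc t * w)‖ = ‖w‖ := by
  rw [norm_mul, abs_expc, one_mul]

lemma expc_int (n : ℤ) : expc (n : ℝ) = 1 := by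
  rw [expc, Complex.exp_eq_one_iff]
  exact ⟨n, by push_cast; ring⟩

lemma expc_eq_one_iff {x : ℝ} : expc x = 1 ↔ ∃ n : ℤ, x = n := by
  rw [expc, Complex.exp_eq_one_iff]
  constructor
  · rintro ⟨n, hn⟩
    refine ⟨n, ?_⟩
    have h2 : (2 * (Real.pi : ℂ) * Complex.I) ≠ 0 := by
      simp [Real.pi_ne_zero, Complex.I_ne_zero]
    rw [show ((n : ℂ) * (2 * (Real.pi : ℂ) * Complex.I))
        = 2 * (Real.pi : ℂ) * Complex.I * (n : ℂ) from by ring] at hn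
    exact_mod_cast mul_left_cancel₀ h2 hn
  · rintro ⟨n, rfl⟩
    exact ⟨n, by push_cast; ring⟩

lemma expc_neg_arg (z : ℂ) :
    expc (-(Complex.arg z) / (2 * Real.pi)) * z = (‖z‖ : ℂ) := by
  have hπ : (Real.pi : ℂ) ≠ 0 := by exact_mod_cast Real.pi_ne_zero
  have h1 : expc (-(Complex.arg z) / (2 * Real.pi))
      = Complex.exp (-(Complex.arg z : ℂ) * Complex.I) := by
    rw [expc]; congr 1; push_cast; field_simp
  rw [h1]
  calc Complex.exp (-(Complex.arg z : ℂ) * Complex.I) * z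
      = Complex.exp (-(Complex.arg z : ℂ) * Complex.I) *
        ((‖z‖ : ℂ) * Complex.exp ((Complex.arg z : ℂ) * Complex.I)) := by
        rw [Complex.norm_mul_exp_arg_mul_I z]
    _ = (‖z‖ : ℂ) *
        Complex.exp (-(Complex.arg z : ℂ) * Complex.I + (Complex.arg z : ℂ) * Complex.I) := by
        rw [Complex.exp_add]; ring
    _ = (‖z‖ : ℂ) := by simp

lemma expc_key {p : ℕ} (hp : 0 < p) (q : ℕ) {θ₁ θ₂ : ℝ}
    (h : expc ((p : ℝ) * θ₁) = expc ((p : ℝ) * θ₂)) :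
    ∃ k : ℤ, expc ((q : ℝ) * θ₁) = expc ((k : ℝ) / (p : ℝ)) * expc ((q : ℝ) * θ₂) := by
  have hp' : (p : ℝ) ≠ 0 := by positivity
  have h1 : expc ((p : ℝ) * θ₁ - (p : ℝ) * θ₂) * expc ((p : ℝ) * θ₂) = expc ((p : ℝ) * θ₂) := by
    rw [← expc_add, sub_add_cancel, h]
  have h2 : expc ((p : ℝ) * θ₁ - (p : ℝ) * θ₂) = 1 := by
    nth_rewrite 2 [← one_mul (expc ((p : ℝ) * θ₂))] at h1
    exact mul_right_cancel₀ (expc_ne_zero _) h1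
  obtain ⟨n, hn⟩ := expc_eq_one_iff.mp h2
  refine ⟨q * n, ?_⟩
  rw [← expc_add]
  congr 1
  push_cast
  field_simp
  linear_combination (q : ℝ) * hn

/-! ### Membership lemmas -/

lemma sq_lt (p q : ℕ) (hp : 0 < p) (hq : 0 < q) {w : ℂ} (hw : w ∈ ball' p) :
    0 < (q : ℝ) - (q : ℝ) / (p : ℝ) * ‖w‖ ^ 2 := by
  have hp' : (0 : ℝ) < p := by exact_mod_cast hp
  have hq' : (0 : ℝ) < q := by exact_mod_cast hq
  have hw' : ‖w‖ ^ 2 < (p : ℝ) := hw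
  have h1 : (q : ℝ) / p * ‖w‖ ^ 2 < (q : ℝ) / p * p :=
    mul_lt_mul_of_pos_left hw' (by positivity)
  rw [div_mul_cancel₀ _ (ne_of_gt hp')] at h1
  linarith

lemma sec_mem (p q : ℕ) (hp : 0 < p) (hq : 0 < q) {w : ℂ} (hw : w ∈ ball' p) :
    (((Real.sqrt ((q : ℝ) - (q : ℝ) / (p : ℝ) * ‖w‖ ^ 2) : ℝ) : ℂ), w)
      ∈ ellipsoid p q := by
  have h0 := sq_lt p q hp hq hw
  have hp' : (p : ℝ) ≠ 0 := by positivity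
  show (p : ℝ) * ‖_‖ ^ 2 + (q : ℝ) * ‖w‖ ^ 2 = (p : ℝ) * q
  rw [Complex.norm_real, Real.norm_eq_abs, _root_.abs_of_nonneg (Real.sqrt_nonneg _), Real.sq_sqrt h0.le]
  field_simp
  ring

lemma wmem (p q : ℕ) (hp : 0 < p) (hq : 0 < q) (x : ellipsoid p q) (t : ℝ)
    (hz : (x : ℂ × ℂ).1 ≠ 0) : expc t * (x : ℂ × ℂ).2 ∈ ball' p := by
  have hx := x.2
  simp only [ellipsoid, Set.mem_setOf_eq] at hx
  have hp' : (0 : ℝ) < p := by exact_mod_cast hp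
  have hq' : (0 : ℝ) < q := by exact_mod_cast hq
  have h1 : 0 < ‖(x : ℂ × ℂ).1‖ ^ 2 := pow_pos (norm_pos_iff.mpr hz) 2
  show ‖(expc t * (x : ℂ × ℂ).2)‖ ^ 2 < (p : ℝ)
  rw [abs_expc_mul]
  have h2 : (q : ℝ) * ‖(x : ℂ × ℂ).2‖ ^ 2 < (q : ℝ) * p := by
    nlinarith
  exact (mul_lt_mul_iff_right₀ hq').mp h2

/-! ### Orbit invariance -/

lemma orbit_fst (p q : ℕ) {x y : ellipsoid p q} (h : orbitRel p q x y) :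
    ((x : ℂ × ℂ).1 = 0 ↔ (y : ℂ × ℂ).1 = 0) := by
  obtain ⟨θ, hθ⟩ := h
  have h1 : (y : ℂ × ℂ).1 = expc ((p : ℝ) * θ) * (x : ℂ × ℂ).1 := by rw [hθ]
  rw [h1, mul_eq_zero]
  simp [expc_ne_zero]

lemma eqv_fst (p q : ℕ) {x y : ellipsoid p q} (h : Relation.EqvGen (orbitRel p q) x y) :
    ((x : ℂ × ℂ).1 = 0 ↔ (y : ℂ × ℂ).1 = 0) := by
  induction h with
  | rel _ _ h => exact orbit_fst p q h
  | refl => exact Iff.rfl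
  | symm _ _ _ ih => exact ih.symm
  | trans _ _ _ _ _ ih1 ih2 => exact ih1.trans ih2

lemma mk_mem_UN (p q : ℕ) (x : ellipsoid p q) :
    Quot.mk (orbitRel p q) x ∈ UN p q ↔ (x : ℂ × ℂ).1 ≠ 0 := by
  constructor
  · rintro ⟨y, hy, hy1⟩
    exact fun h => hy1 ((eqv_fst p q (Quot.eq.mp hy)).mpr h)
  · exact fun h => ⟨x, rfl, h⟩

/-! ### Normalizing angles -/

noncomputable def th0 (p : ℕ) (z : ℂ) : ℝ := -(Complex.arg z) / (2 * Real.pi * p)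

noncomputable def th1 (p : ℕ) (z : ℂ) : ℝ :=
  -(Complex.arg (-z) + Real.pi) / (2 * Real.pi * p)

lemma th0_prop (p : ℕ) (hp : 0 < p) (z : ℂ) :
    expc ((p : ℝ) * th0 p z) * z = (‖z‖ : ℂ) := by
  have hp' : (p : ℝ) ≠ 0 := by positivity
  have h : (p : ℝ) * th0 p z = -(Complex.arg z) / (2 * Real.pi) := by
    rw [th0]; field_simp
  rw [h, expc_neg_arg]

lemma expc_neg_half : expc (-(1 / 2 : ℝ)) = -1 := by
  have h : expc (-(1 / 2 : ℝ)) = Complex.exp (-((Real.pi : ℂ) * Complex.I)) := by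
    rw [expc]; congr 1; push_cast; ring
  rw [h, Complex.exp_neg, Complex.exp_pi_mul_I]
  norm_num

lemma th1_prop (p : ℕ) (hp : 0 < p) (z : ℂ) :
    expc ((p : ℝ) * th1 p z) * z = (‖z‖ : ℂ) := by
  have hp' : (p : ℝ) ≠ 0 := by positivity
  have hπ : Real.pi ≠ 0 := Real.pi_ne_zero
  have h : (p : ℝ) * th1 p z = -(Complex.arg (-z)) / (2 * Real.pi) + -(1 / 2 : ℝ) := by
    rw [th1]; field_simp; ring
  rw [h, expc_add, expc_neg_half]
  calc expc (-(Complex.arg (-z)) / (2 * Real.pi)) * (-1) * z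
      = expc (-(Complex.arg (-z)) / (2 * Real.pi)) * (-z) := by ring
    _ = (‖(-z)‖ : ℂ) := expc_neg_arg (-z)
    _ = (‖z‖ : ℂ) := by rw [norm_neg]

/-! ### The key quotient equality -/

lemma quot_eq_of_prop (p q : ℕ) (hp : 0 < p) {z w : ℂ} (hz : z ≠ 0) {θ₁ θ₂ : ℝ}
    (h₁ : expc ((p : ℝ) * θ₁) * z = (‖z‖ : ℂ))
    (h₂ : expc ((p : ℝ) * θ₂) * z = (‖z‖ : ℂ))
    (m₁ : expc ((q : ℝ) * θ₁) * w ∈ ball' p) (m₂ : expc ((q : ℝ) * θ₂) * w ∈ ball' p) :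
    Quot.mk (ballRel p) ⟨expc ((q : ℝ) * θ₁) * w, m₁⟩
      = Quot.mk (ballRel p) ⟨expc ((q : ℝ) * θ₂) * w, m₂⟩ := by
  have h : expc ((p : ℝ) * θ₁) = expc ((p : ℝ) * θ₂) :=
    mul_right_cancel₀ hz (h₁.trans h₂.symm)
  obtain ⟨k, hk⟩ := expc_key hp q h
  exact (Quot.sound (⟨k, by show expc ((q : ℝ) * θ₁) * w = _; rw [hk]; ring⟩ :
    ballRel p ⟨expc ((q : ℝ) * θ₂) * w, m₂⟩ ⟨expc ((q : ℝ) * θ₁) * w, m₁⟩)).symm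


/-! ### The section map and the forward map -/

noncomputable def secl (p q : ℕ) (hp : 0 < p) (hq : 0 < q) (w : ball' p) : ellipsoid p q :=
  ⟨(((Real.sqrt ((q : ℝ) - (q : ℝ) / (p : ℝ) * ‖(w : ℂ)‖ ^ 2) : ℝ) : ℂ), (w : ℂ)),
    sec_mem p q hp hq w.2⟩

lemma secl_fst_ne (p q : ℕ) (hp : 0 < p) (hq : 0 < q) (w : ball' p) :
    ((secl p q hp hq w : ℂ × ℂ)).1 ≠ 0 := by
  show ((Real.sqrt _ : ℝ) : ℂ) ≠ 0
  rw [Complex.ofReal_ne_zero]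
  exact ne_of_gt (Real.sqrt_pos.mpr (sq_lt p q hp hq w.2))

noncomputable def F0 (p q : ℕ) (hp : 0 < p) (hq : 0 < q) (w : ball' p) : UN p q :=
  ⟨Quot.mk (orbitRel p q) (secl p q hp hq w),
    (mk_mem_UN p q _).mpr (secl_fst_ne p q hp hq w)⟩

lemma F0_invar (p q : ℕ) (hp : 0 < p) (hq : 0 < q) (hpq : Nat.Coprime p q)
    (a b : ball' p) (hab : ballRel p a b) : F0 p q hp hq a = F0 p q hp hq b := by
  obtain ⟨k, hk⟩ := hab
  have hp' : (p : ℝ) ≠ 0 := by positivity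
  have hg : (1 : ℤ) = (p : ℤ) * Int.gcdA p q + (q : ℤ) * Int.gcdB p q := by
    have h1 := Int.gcd_eq_gcd_ab (p : ℤ) (q : ℤ)
    rwa [Int.gcd_natCast_natCast, hpq, Nat.cast_one] at h1
  have hgR : (1 : ℝ) = (p : ℝ) * (Int.gcdA p q : ℝ) + (q : ℝ) * (Int.gcdB p q : ℝ) := by
    exact_mod_cast hg
  set θ : ℝ := ((Int.gcdB p q * k : ℤ) : ℝ) / (p : ℝ) with hθdef
  have habs : ‖(b : ℂ)‖ = ‖(a : ℂ)‖ := by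
    rw [hk, abs_expc_mul]
  have hpθ : expc ((p : ℝ) * θ) = 1 := by
    have h1 : (p : ℝ) * θ = ((Int.gcdB p q * k : ℤ) : ℝ) := by
      rw [hθdef]; field_simp
    rw [h1, expc_int]
  have hqθ : expc ((q : ℝ) * θ) = expc ((k : ℝ) / (p : ℝ)) := by
    have h1 : (q : ℝ) * θ = (k : ℝ) / (p : ℝ) + ((-(Int.gcdA p q * k) : ℤ) : ℝ) := by
      rw [hθdef]
      push_cast
      field_simp
      linear_combination (-(k : ℝ)) * hgR
    rw [h1, expc_add, expc_int, mul_one]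
  apply Subtype.ext
  show Quot.mk _ (secl p q hp hq a) = Quot.mk _ (secl p q hp hq b)
  apply Quot.sound
  refine ⟨θ, ?_⟩
  have h2 : ((secl p q hp hq b : ℂ × ℂ)) =
      (((Real.sqrt ((q : ℝ) - (q : ℝ) / (p : ℝ) * ‖(a : ℂ)‖ ^ 2) : ℝ) : ℂ), (b : ℂ)) := by
    show (((Real.sqrt _ : ℝ) : ℂ), (b : ℂ)) = _
    rw [habs]
  rw [h2]
  refine Prod.ext ?_ ?_
  · show ((Real.sqrt _ : ℝ) : ℂ) = expc ((p : ℝ) * θ) * _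
    rw [hpθ, one_mul]
    rfl
  · show (b : ℂ) = expc ((q : ℝ) * θ) * (a : ℂ)
    rw [hqθ, hk]

/-! ### The backward map -/

noncomputable def Hhat (p q : ℕ) (hp : 0 < p) (hq : 0 < q) (x : ellipsoid p q) :
    Quot (ballRel p) :=
  if h : (x : ℂ × ℂ).1 = 0 then
    Quot.mk _ ⟨0, show ‖0‖ ^ 2 < (p : ℝ) by
      simpa using (by exact_mod_cast hp : (0 : ℝ) < p)⟩
  else
    Quot.mk _ ⟨expc ((q : ℝ) * th0 p (x : ℂ × ℂ).1) * (x : ℂ × ℂ).2, wmem p q hp hq x _ h⟩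

lemma Hhat_invar (p q : ℕ) (hp : 0 < p) (hq : 0 < q) (x y : ellipsoid p q)
    (h : orbitRel p q x y) : Hhat p q hp hq x = Hhat p q hp hq y := by
  by_cases hz : (x : ℂ × ℂ).1 = 0
  · have hz' : (y : ℂ × ℂ).1 = 0 := (orbit_fst p q h).mp hz
    rw [Hhat, Hhat, dif_pos hz, dif_pos hz']
  · have hz' : (y : ℂ × ℂ).1 ≠ 0 := fun h0 => hz ((orbit_fst p q h).mpr h0)
    rw [Hhat, Hhat, dif_neg hz, dif_neg hz']
    obtain ⟨θ, hθ⟩ := h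
    have hy1 : (y : ℂ × ℂ).1 = expc ((p : ℝ) * θ) * (x : ℂ × ℂ).1 := by rw [hθ]
    have hy2 : (y : ℂ × ℂ).2 = expc ((q : ℝ) * θ) * (x : ℂ × ℂ).2 := by rw [hθ]
    have hval : expc ((q : ℝ) * th0 p (y : ℂ × ℂ).1) * (y : ℂ × ℂ).2
        = expc ((q : ℝ) * (th0 p (y : ℂ × ℂ).1 + θ)) * (x : ℂ × ℂ).2 := by
      rw [hy2, mul_add, expc_add]; ring
    have hmem2 : expc ((q : ℝ) * (th0 p (y : ℂ × ℂ).1 + θ)) * (x : ℂ × ℂ).2 ∈ ball' p :=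
      wmem p q hp hq x _ hz
    have hsub : (⟨expc ((q : ℝ) * th0 p (y : ℂ × ℂ).1) * (y : ℂ × ℂ).2,
        wmem p q hp hq y _ hz'⟩ : ball' p) = ⟨_, hmem2⟩ := Subtype.ext hval
    rw [hsub]
    have h₂ : expc ((p : ℝ) * (th0 p (y : ℂ × ℂ).1 + θ)) * (x : ℂ × ℂ).1
        = (‖(x : ℂ × ℂ).1‖ : ℂ) := by
      calc expc ((p : ℝ) * (th0 p (y : ℂ × ℂ).1 + θ)) * (x : ℂ × ℂ).1
          = expc ((p : ℝ) * th0 p (y : ℂ × ℂ).1) * (expc ((p : ℝ) * θ) * (x : ℂ × ℂ).1) := by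
            rw [mul_add, expc_add]; ring
        _ = expc ((p : ℝ) * th0 p (y : ℂ × ℂ).1) * (y : ℂ × ℂ).1 := by rw [← hy1]
        _ = (‖(y : ℂ × ℂ).1‖ : ℂ) := th0_prop p hp _
        _ = (‖(x : ℂ × ℂ).1‖ : ℂ) := by rw [hy1, abs_expc_mul]
    exact quot_eq_of_prop p q hp hz (th0_prop p hp _) h₂ _ hmem2


/-! ### Continuity -/

lemma cont_expc : Continuous expc := by
  have h : expc = fun x : ℝ => Complex.exp (2 * Real.pi * Complex.I * (x : ℂ)) := rfl
  rw [h]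
  exact Complex.continuous_exp.comp (continuous_const.mul Complex.continuous_ofReal)

noncomputable def secl' := @secl

lemma cont_secl (p q : ℕ) (hp : 0 < p) (hq : 0 < q) : Continuous (secl p q hp hq) := by
  apply Continuous.subtype_mk
  apply Continuous.prodMk
  · apply Complex.continuous_ofReal.comp
    apply Real.continuous_sqrt.comp
    exact continuous_const.sub (continuous_const.mul
      ((continuous_norm.comp continuous_subtype_val).pow 2))
  · exact continuous_subtype_val

lemma cont_F0 (p q : ℕ) (hp : 0 < p) (hq : 0 < q) : Continuous (F0 p q hp hq) :=
  Continuous.subtype_mk (continuous_quot_mk.comp (cont_secl p q hp hq)) _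

noncomputable def Hone (p q : ℕ) (hp : 0 < p) (hq : 0 < q)
    (x : {x : ellipsoid p q // (x : ℂ × ℂ).1 ≠ 0}) : Quot (ballRel p) :=
  Quot.mk (ballRel p) ⟨expc ((q : ℝ) * th0 p ((x : ellipsoid p q) : ℂ × ℂ).1)
    * ((x : ellipsoid p q) : ℂ × ℂ).2, wmem p q hp hq x.1 _ x.2⟩

noncomputable def Htwo (p q : ℕ) (hp : 0 < p) (hq : 0 < q)
    (x : {x : ellipsoid p q // (x : ℂ × ℂ).1 ≠ 0}) : Quot (ballRel p) :=
  Quot.mk (ballRel p) ⟨expc ((q : ℝ) * th1 p ((x : ellipsoid p q) : ℂ × ℂ).1)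
    * ((x : ellipsoid p q) : ℂ × ℂ).2, wmem p q hp hq x.1 _ x.2⟩

lemma Hone_eq_Htwo (p q : ℕ) (hp : 0 < p) (hq : 0 < q) :
    Hone p q hp hq = Htwo p q hp hq :=
  funext fun x => quot_eq_of_prop p q hp x.2 (th0_prop p hp _) (th1_prop p hp _) _ _

lemma Hhat_of_ne (p q : ℕ) (hp : 0 < p) (hq : 0 < q) (x : ellipsoid p q)
    (h : (x : ℂ × ℂ).1 ≠ 0) : Hhat p q hp hq x = Hone p q hp hq ⟨x, h⟩ := by
  rw [Hhat, dif_neg h]; rfl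

lemma slit_or (z : ℂ) (hz : z ≠ 0) : z ∈ Complex.slitPlane ∨ -z ∈ Complex.slitPlane := by
  rw [Complex.mem_slitPlane_iff, Complex.mem_slitPlane_iff]
  simp only [Complex.neg_re, Complex.neg_im, neg_ne_zero]
  rcases lt_trichotomy z.re 0 with h | h | h
  · right; left; linarith
  · by_cases him : z.im = 0
    · exact absurd (Complex.ext (by simpa using h) (by simpa using him)) hz
    · left; right; exact him
  · left; left; exact h

lemma cont_Hone (p q : ℕ) (hp : 0 < p) (hq : 0 < q) : Continuous (Hone p q hp hq) := by
  rw [continuous_iff_continuousAt]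
  intro x
  have cont_z : Continuous (fun y : {x : ellipsoid p q // (x : ℂ × ℂ).1 ≠ 0} =>
      ((y : ellipsoid p q) : ℂ × ℂ).1) :=
    continuous_fst.comp (continuous_subtype_val.comp continuous_subtype_val)
  have cont_w : Continuous (fun y : {x : ellipsoid p q // (x : ℂ × ℂ).1 ≠ 0} =>
      ((y : ellipsoid p q) : ℂ × ℂ).2) :=
    continuous_snd.comp (continuous_subtype_val.comp continuous_subtype_val)
  rcases slit_or _ x.2 with hs | hs
  · have hval : ContinuousAt (fun y : {x : ellipsoid p q // (x : ℂ × ℂ).1 ≠ 0} =>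
        expc ((q : ℝ) * th0 p ((y : ellipsoid p q) : ℂ × ℂ).1)
          * ((y : ellipsoid p q) : ℂ × ℂ).2) x := by
      have harg : ContinuousAt (fun y : {x : ellipsoid p q // (x : ℂ × ℂ).1 ≠ 0} =>
          Complex.arg ((y : ellipsoid p q) : ℂ × ℂ).1) x :=
        ContinuousAt.comp (g := Complex.arg)
          (f := fun y : {x : ellipsoid p q // (x : ℂ × ℂ).1 ≠ 0} =>
            ((y : ellipsoid p q) : ℂ × ℂ).1)
          (Complex.continuousAt_arg hs) cont_z.continuousAt
      apply ContinuousAt.mul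
      · apply cont_expc.continuousAt.comp
        apply ContinuousAt.mul continuousAt_const
        simp only [th0]
        exact harg.neg.div_const _
      · exact cont_w.continuousAt
    have hinner : ContinuousAt (fun y : {x : ellipsoid p q // (x : ℂ × ℂ).1 ≠ 0} =>
        (⟨expc ((q : ℝ) * th0 p ((y : ellipsoid p q) : ℂ × ℂ).1)
          * ((y : ellipsoid p q) : ℂ × ℂ).2, wmem p q hp hq y.1 _ y.2⟩ : ball' p)) x :=
      Topology.IsInducing.subtypeVal.continuousAt_iff.mpr hval
    exact (continuous_quot_mk.continuousAt).comp hinner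
  · rw [Hone_eq_Htwo p q hp hq]
    have hval : ContinuousAt (fun y : {x : ellipsoid p q // (x : ℂ × ℂ).1 ≠ 0} =>
        expc ((q : ℝ) * th1 p ((y : ellipsoid p q) : ℂ × ℂ).1)
          * ((y : ellipsoid p q) : ℂ × ℂ).2) x := by
      have harg : ContinuousAt (fun y : {x : ellipsoid p q // (x : ℂ × ℂ).1 ≠ 0} =>
          Complex.arg (-((y : ellipsoid p q) : ℂ × ℂ).1)) x :=
        ContinuousAt.comp (g := Complex.arg)
          (f := fun y : {x : ellipsoid p q // (x : ℂ × ℂ).1 ≠ 0} =>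
            -((y : ellipsoid p q) : ℂ × ℂ).1)
          (Complex.continuousAt_arg hs) cont_z.neg.continuousAt
      apply ContinuousAt.mul
      · apply cont_expc.continuousAt.comp
        apply ContinuousAt.mul continuousAt_const
        simp only [th1]
        exact (harg.add continuousAt_const).neg.div_const _
      · exact cont_w.continuousAt
    have hinner : ContinuousAt (fun y : {x : ellipsoid p q // (x : ℂ × ℂ).1 ≠ 0} =>
        (⟨expc ((q : ℝ) * th1 p ((y : ellipsoid p q) : ℂ × ℂ).1)
          * ((y : ellipsoid p q) : ℂ × ℂ).2, wmem p q hp hq y.1 _ y.2⟩ : ball' p)) x :=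
      Topology.IsInducing.subtypeVal.continuousAt_iff.mpr hval
    exact (continuous_quot_mk.continuousAt).comp hinner

lemma cont_Gmap (p q : ℕ) (hp : 0 < p) (hq : 0 < q) :
    Continuous (fun u : UN p q =>
      Quot.lift (Hhat p q hp hq) (Hhat_invar p q hp hq) u.1) := by
  rw [continuous_def]
  intro U hU
  set L := Quot.lift (Hhat p q hp hq) (Hhat_invar p q hp hq) with hLdef
  set V : Set (Quot (orbitRel p q)) := {o | o ∈ UN p q ∧ L o ∈ U} with hVdef
  have hXSopen : IsOpen {x : ellipsoid p q | ((x : ℂ × ℂ)).1 ≠ 0} := by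
    have h : {x : ellipsoid p q | ((x : ℂ × ℂ)).1 ≠ 0}
        = (fun x : ellipsoid p q => (x : ℂ × ℂ).1) ⁻¹' {z | z ≠ 0} := rfl
    rw [h]
    exact isOpen_ne.preimage (continuous_fst.comp continuous_subtype_val)
  have hpre : Quot.mk (orbitRel p q) ⁻¹' V
      = Subtype.val '' (Hone p q hp hq ⁻¹' U) := by
    ext x
    simp only [Set.mem_preimage, Set.mem_image, Set.mem_setOf_eq, hVdef]
    constructor
    · rintro ⟨hUN, hLU⟩
      have hx1 : (x : ℂ × ℂ).1 ≠ 0 := (mk_mem_UN p q x).mp hUN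
      refine ⟨⟨x, hx1⟩, ?_, rfl⟩
      show Hone p q hp hq ⟨x, hx1⟩ ∈ U
      rw [← Hhat_of_ne p q hp hq x hx1]
      exact hLU
    · rintro ⟨⟨y, hy1⟩, hyU, rfl⟩
      refine ⟨(mk_mem_UN p q y).mpr hy1, ?_⟩
      show Hhat p q hp hq y ∈ U
      rw [Hhat_of_ne p q hp hq y hy1]
      exact hyU
  have hVopen : IsOpen V := by
    rw [← isQuotientMap_quot_mk.isOpen_preimage, hpre]
    exact hXSopen.isOpenMap_subtype_val _ (hU.preimage (cont_Hone p q hp hq))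
  have hpre2 : (fun u : UN p q => L u.1) ⁻¹' U = Subtype.val ⁻¹' V := by
    ext u
    simp only [Set.mem_preimage, hVdef, Set.mem_setOf_eq]
    exact ⟨fun h => ⟨u.2, h⟩, fun h => h.2⟩
  rw [hpre2]
  exact hVopen.preimage continuous_subtype_val

/-! ### The two maps are inverse to each other -/

lemma left_inv (p q : ℕ) (hp : 0 < p) (hq : 0 < q) (hpq : Nat.Coprime p q)
    (a : Quot (ballRel p)) :
    Quot.lift (Hhat p q hp hq) (Hhat_invar p q hp hq)
      (Quot.lift (F0 p q hp hq) (F0_invar p q hp hq hpq) a).1 = a := by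
  induction a using Quot.ind
  next w =>
  show Hhat p q hp hq (secl p q hp hq w) = Quot.mk _ w
  rw [Hhat_of_ne p q hp hq _ (secl_fst_ne p q hp hq w)]
  have hm2 : expc ((q : ℝ) * 0) * (w : ℂ) ∈ ball' p := by
    rw [mul_zero, expc_zero, one_mul]; exact w.2
  have h2 : expc ((p : ℝ) * 0) * ((secl p q hp hq w : ℂ × ℂ)).1
      = (‖((secl p q hp hq w : ℂ × ℂ)).1‖ : ℂ) := by
    rw [mul_zero, expc_zero, one_mul]
    have hval : ((secl p q hp hq w : ℂ × ℂ)).1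
        = ((Real.sqrt ((q : ℝ) - (q : ℝ) / (p : ℝ) * ‖(w : ℂ)‖ ^ 2) : ℝ) : ℂ) := rfl
    rw [hval, Complex.norm_real, Real.norm_eq_abs, _root_.abs_of_nonneg (Real.sqrt_nonneg _)]
  have h3 := quot_eq_of_prop p q hp (secl_fst_ne p q hp hq w)
    (th0_prop p hp _) h2 (wmem p q hp hq _ _ (secl_fst_ne p q hp hq w)) hm2
  refine h3.trans ?_
  refine congrArg _ (Subtype.ext ?_)
  show expc ((q : ℝ) * 0) * ((secl p q hp hq w : ℂ × ℂ)).2 = (w : ℂ)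
  rw [mul_zero, expc_zero, one_mul]
  rfl

lemma abs_fst_sq (p q : ℕ) (hp : 0 < p) (hq : 0 < q) (x : ellipsoid p q) :
    (q : ℝ) - (q : ℝ) / (p : ℝ) * ‖(x : ℂ × ℂ).2‖ ^ 2
      = ‖(x : ℂ × ℂ).1‖ ^ 2 := by
  have hx := x.2
  simp only [ellipsoid, Set.mem_setOf_eq] at hx
  have hp' : (p : ℝ) ≠ 0 := by positivity
  field_simp
  linear_combination -hx

lemma F0_Hhat (p q : ℕ) (hp : 0 < p) (hq : 0 < q) (hpq : Nat.Coprime p q)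
    (x : ellipsoid p q) (hx1 : (x : ℂ × ℂ).1 ≠ 0) :
    Quot.lift (F0 p q hp hq) (F0_invar p q hp hq hpq) (Hhat p q hp hq x)
      = ⟨Quot.mk (orbitRel p q) x, ⟨x, rfl, hx1⟩⟩ := by
  rw [Hhat_of_ne p q hp hq x hx1]
  apply Subtype.ext
  show Quot.mk (orbitRel p q)
      (secl p q hp hq ⟨expc ((q : ℝ) * th0 p (x : ℂ × ℂ).1) * (x : ℂ × ℂ).2,
        wmem p q hp hq x _ hx1⟩) = Quot.mk (orbitRel p q) x
  refine (Quot.sound (⟨th0 p (x : ℂ × ℂ).1, ?_⟩ :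
    orbitRel p q x _)).symm
  refine Prod.ext ?_ ?_
  · show ((Real.sqrt _ : ℝ) : ℂ) = expc ((p : ℝ) * th0 p (x : ℂ × ℂ).1) * (x : ℂ × ℂ).1
    rw [abs_expc_mul, abs_fst_sq p q hp hq x, Real.sqrt_sq (norm_nonneg _)]
    exact (th0_prop p hp _).symm
  · rfl

lemma right_inv (p q : ℕ) (hp : 0 < p) (hq : 0 < q) (hpq : Nat.Coprime p q)
    (u : UN p q) :
    Quot.lift (F0 p q hp hq) (F0_invar p q hp hq hpq)
      (Quot.lift (Hhat p q hp hq) (Hhat_invar p q hp hq) u.1) = u := by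
  obtain ⟨o, ho⟩ := u
  obtain ⟨x, hxo, hx1⟩ := id ho
  subst hxo
  exact (F0_Hhat p q hp hq hpq x hx1).trans (Subtype.ext rfl)

end OrbisphereN

/-- For `p, q` relatively prime positive integers, `Γ_{1/p}` acts on `B(p)` by complex
multiplication, and the map `B(p)/Γ_{1/p} → U_N`, `[w] ↦ [√(q − (q/p)|w|²) : w]`, is well
defined and a homeomorphism (quotient topology on the source, subspace topology from the
quotient topology on the target). -/
theorem orbisphere_chart_N (p q : ℕ) (hp : 0 < p) (hq : 0 < q) (hpq : Nat.Coprime p q) :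
    (∀ w : ℂ, w ∈ ball' p → ∀ k : ℤ, expc ((k : ℝ) / (p : ℝ)) * w ∈ ball' p) ∧
    ∃ h : Quot (ballRel p) ≃ₜ UN p q,
      ∀ (w : ℂ) (hw : w ∈ ball' p) (x : ellipsoid p q),
        (x : ℂ × ℂ) =
            ((Real.sqrt ((q : ℝ) - (q : ℝ) / (p : ℝ) * ‖w‖ ^ 2) : ℂ), w) →
          (h (Quot.mk (ballRel p) ⟨w, hw⟩) : Quot (orbitRel p q)) =
            Quot.mk (orbitRel p q) x := by
  constructor
  · intro w hw k
    show ‖_‖ ^ 2 < (p : ℝ)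
    rw [OrbisphereN.abs_expc_mul]
    exact hw
  · refine ⟨⟨⟨Quot.lift (OrbisphereN.F0 p q hp hq) (OrbisphereN.F0_invar p q hp hq hpq),
      fun u => Quot.lift (OrbisphereN.Hhat p q hp hq) (OrbisphereN.Hhat_invar p q hp hq) u.1,
      OrbisphereN.left_inv p q hp hq hpq, OrbisphereN.right_inv p q hp hq hpq⟩,
      continuous_quot_lift _ (OrbisphereN.cont_F0 p q hp hq),
      OrbisphereN.cont_Gmap p q hp hq⟩, ?_⟩
    intro w hw x hx
    have hs : OrbisphereN.secl p q hp hq ⟨w, hw⟩ = x := Subtype.ext hx.symm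
    simp only [Homeomorph.homeomorph_mk_coe, Equiv.coe_fn_mk]
    exact congrArg (Quot.mk (orbitRel p q)) hs
end

section
/- Let s, t be positive real numbers with s/t irrational, let S²_{s,t} = S³_{s,t}/N be the orbit space of the ellipsoid under the componentwise action of N = {(e^{2πisθ}, e^{2πitθ}) : θ ∈ ℝ}, with the quotient topology, and let U_N = {[z:w] ∈ S²_{s,t} : z ≠ 0}. The countable group Γ_{t/s} = {e^{2πikt/s} : k ∈ ℤ} acts on B(s) = {w ∈ ℂ : |w|² < s} by complex multiplication, and the map B(s)/Γ_{t/s} → U_N sending the class [w] to the orbit [√(t − (t/s)|w|²) : w] is well defined and is a homeomorphism, where B(s)/Γ_{t/s} carries the quotient topology and U_N the subspace topology. -/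
open Complex

/-- The ellipsoid `S³_{s,t} = {(z,w) ∈ ℂ² : s|z|² + t|w|² = st}`. -/
def ellipsoidR (s t : ℝ) : Set (ℂ × ℂ) :=
  {z | s * ‖z.1‖ ^ 2 + t * ‖z.2‖ ^ 2 = s * t}

/-- Orbit relation of the componentwise action of `N = {(e^{2πisθ}, e^{2πitθ}) : θ ∈ ℝ}`
on the ellipsoid `S³_{s,t}`. -/
noncomputable def orbitRelR (s t : ℝ) (x y : ellipsoidR s t) : Prop :=
  ∃ θ : ℝ, (y : ℂ × ℂ) = (expc (s * θ) * (x : ℂ × ℂ).1, expc (t * θ) * (x : ℂ × ℂ).2)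

/-- The ball `B(s) = {w ∈ ℂ : |w|² < s}`. -/
def ballR (s : ℝ) : Set ℂ := {w | ‖w‖ ^ 2 < s}

/-- Orbit relation of the action of `Γ_{t/s} = {e^{2πikt/s} : k ∈ ℤ}` on `B(s)` by complex
multiplication. -/
noncomputable def ballRelR' (s t : ℝ) (x y : ballR s) : Prop :=
  ∃ k : ℤ, (y : ℂ) = expc ((k : ℝ) * (t / s)) * (x : ℂ)

/-- `U_N = {[z:w] ∈ S²_{s,t} : z ≠ 0}`. -/
noncomputable def UNR (s t : ℝ) : Set (Quot (orbitRelR s t)) :=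
  {o | ∃ x : ellipsoidR s t, Quot.mk (orbitRelR s t) x = o ∧ (x : ℂ × ℂ).1 ≠ 0}

namespace QSC

lemma expc_add (a b : ℝ) : expc (a + b) = expc a * expc b := by
  unfold expc
  rw [← Complex.exp_add]
  push_cast
  ring_nf

lemma expc_zero : expc 0 = 1 := by simp [expc]

lemma expc_int (k : ℤ) : expc (k : ℝ) = 1 := by
  unfold expc
  rw [← Complex.exp_int_mul_two_pi_mul_I k]
  push_cast
  ring_nf

lemma expc_ne_zero (x : ℝ) : expc x ≠ 0 := Complex.exp_ne_zero _

lemma abs_expc (x : ℝ) : ‖expc x‖ = 1 := by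
  unfold expc
  have h : (2 * (Real.pi : ℂ) * Complex.I * (x : ℝ)) = ((2 * Real.pi * x : ℝ) : ℂ) * Complex.I := by
    push_cast; ring
  rw [h, Complex.norm_exp]
  simp

lemma continuous_expc : Continuous expc := by
  unfold expc
  exact Complex.continuous_exp.comp (continuous_const.mul Complex.continuous_ofReal)

lemma expc_eq_cos_sin (r : ℝ) :
    expc r = ((Real.cos (2 * Real.pi * r) : ℝ) : ℂ) + ((Real.sin (2 * Real.pi * r) : ℝ) : ℂ) * Complex.I := by
  have h : expc r = Complex.exp (((2 * Real.pi * r : ℝ) : ℂ) * Complex.I) := by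
    unfold expc; push_cast; ring_nf
  rw [h, Complex.exp_mul_I, Complex.ofReal_cos, Complex.ofReal_sin]

lemma arg_expc_mul (r : ℝ) {z : ℂ} (hz : z ≠ 0) :
    ∃ m : ℤ, (expc r * z).arg = 2 * Real.pi * r + z.arg + 2 * Real.pi * m := by
  have h1 : (expc r : ℂ) ≠ 0 := expc_ne_zero r
  have hangle : ((expc r).arg : Real.Angle) = ((2 * Real.pi * r : ℝ) : Real.Angle) := by
    have := Complex.arg_cos_add_sin_mul_I_coe_angle ((2 * Real.pi * r : ℝ) : Real.Angle)
    rw [Real.Angle.cos_coe, Real.Angle.sin_coe] at this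
    rw [expc_eq_cos_sin r]
    exact this
  have h2 : (((expc r * z).arg : ℝ) : Real.Angle) = ((2 * Real.pi * r + z.arg : ℝ) : Real.Angle) := by
    rw [Complex.arg_mul_coe_angle h1 hz, hangle, Real.Angle.coe_add]
  obtain ⟨k, hk⟩ := Real.Angle.angle_eq_iff_two_pi_dvd_sub.mp h2
  exact ⟨k, by linarith⟩

lemma arg_div_add {z z₀ : ℂ} (hz : z ≠ 0) (hz₀ : z₀ ≠ 0) :
    ∃ m : ℤ, (z / z₀).arg + z₀.arg = z.arg + 2 * Real.pi * m := by
  have h2 : (((z / z₀).arg + z₀.arg : ℝ) : Real.Angle) = ((z.arg : ℝ) : Real.Angle) := by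
    rw [Real.Angle.coe_add, Complex.arg_div_coe_angle hz hz₀, sub_add_cancel]
  obtain ⟨k, hk⟩ := Real.Angle.angle_eq_iff_two_pi_dvd_sub.mp h2
  exact ⟨k, by linarith⟩

variable (s t : ℝ)

lemma orbit_equiv : Equivalence (orbitRelR s t) := by
  constructor
  · intro x
    exact ⟨0, by simp [mul_zero, expc_zero]⟩
  · rintro x y ⟨θ, h⟩
    refine ⟨-θ, ?_⟩
    rw [h]
    have h1 : expc (s * -θ) * (expc (s * θ) * (x : ℂ × ℂ).1) = (x : ℂ × ℂ).1 := by
      rw [← mul_assoc, ← expc_add, show s * -θ + s * θ = 0 by ring, expc_zero, one_mul]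
    have h2 : expc (t * -θ) * (expc (t * θ) * (x : ℂ × ℂ).2) = (x : ℂ × ℂ).2 := by
      rw [← mul_assoc, ← expc_add, show t * -θ + t * θ = 0 by ring, expc_zero, one_mul]
    simp only [h1, h2]
  · rintro x y z ⟨θ₁, h1⟩ ⟨θ₂, h2⟩
    refine ⟨θ₁ + θ₂, ?_⟩
    rw [h2, h1]
    simp only [Prod.mk.injEq]
    constructor
    · rw [← mul_assoc, ← expc_add]; ring_nf
    · rw [← mul_assoc, ← expc_add]; ring_nf

lemma mk_mem_UNR (x : ellipsoidR s t) :
    Quot.mk (orbitRelR s t) x ∈ UNR s t ↔ (x : ℂ × ℂ).1 ≠ 0 := by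
  constructor
  · rintro ⟨x', hmk, hne⟩
    obtain ⟨θ, hθ⟩ := (orbit_equiv s t).eqvGen_iff.mp (Quot.eq.mp hmk)
    have h1 : (x : ℂ × ℂ).1 = expc (s * θ) * (x' : ℂ × ℂ).1 := congrArg Prod.fst hθ
    rw [h1]
    exact mul_ne_zero (expc_ne_zero _) hne
  · intro h; exact ⟨x, rfl, h⟩

variable {s t : ℝ}

lemma sqrt_arg_pos (hs : 0 < s) (ht : 0 < t) {w : ℂ} (hw : w ∈ ballR s) : 0 < t - t / s * ‖w‖ ^ 2 := by
  have h1 : t / s * s = t := div_mul_cancel₀ t hs.ne'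
  have h2 : (0:ℝ) < t / s := div_pos ht hs
  have hw' : ‖w‖ ^ 2 < s := hw
  nlinarith [mul_lt_mul_of_pos_left hw' h2]

lemma mem_ellipsoid_F0 (hs : 0 < s) (ht : 0 < t) {w : ℂ} (hw : w ∈ ballR s) :
    (((Real.sqrt (t - t / s * ‖w‖ ^ 2) : ℝ) : ℂ), w) ∈ ellipsoidR s t := by
  have hpos := sqrt_arg_pos hs ht hw
  show s * ‖(_ : ℂ)‖ ^ 2 + t * ‖w‖ ^ 2 = s * t
  rw [Complex.norm_of_nonneg (Real.sqrt_nonneg _), Real.sq_sqrt hpos.le]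
  field_simp
  ring

noncomputable def F0 (hs : 0 < s) (ht : 0 < t) (w : ballR s) : ellipsoidR s t :=
  ⟨(((Real.sqrt (t - t / s * ‖(w : ℂ)‖ ^ 2) : ℝ) : ℂ), (w : ℂ)),
    mem_ellipsoid_F0 hs ht w.2⟩

lemma F0_fst_ne (hs : 0 < s) (ht : 0 < t) (w : ballR s) : ((F0 hs ht w : ℂ × ℂ)).1 ≠ 0 := by
  have h := sqrt_arg_pos hs ht (t := t) w.2
  show ((Real.sqrt _ : ℝ) : ℂ) ≠ 0
  exact Complex.ofReal_ne_zero.mpr (Real.sqrt_pos.mpr h).ne'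

lemma F0_resp (hs : 0 < s) (ht : 0 < t) (a b : ballR s) (hab : ballRelR' s t a b) :
    Quot.mk (orbitRelR s t) (F0 hs ht a) = Quot.mk (orbitRelR s t) (F0 hs ht b) := by
  obtain ⟨k, hk⟩ := hab
  apply Quot.sound
  refine ⟨(k : ℝ) / s, ?_⟩
  have h1 : s * ((k : ℝ) / s) = (k : ℝ) := by field_simp
  have h2 : t * ((k : ℝ) / s) = (k : ℝ) * (t / s) := by ring
  have habs : ‖(b : ℂ)‖ = ‖(a : ℂ)‖ := by
    rw [hk, norm_mul, abs_expc, one_mul]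
  show ((_ : ℂ), (b : ℂ)) = (_, _)
  simp only [F0, Prod.mk.injEq]
  constructor
  · rw [h1, expc_int, one_mul, habs]
  · rw [h2, hk]

noncomputable def Fq (hs : 0 < s) (ht : 0 < t) : Quot (ballRelR' s t) → Quot (orbitRelR s t) :=
  Quot.lift (fun w => Quot.mk (orbitRelR s t) (F0 hs ht w)) (F0_resp hs ht)

lemma Fq_cont (hs : 0 < s) (ht : 0 < t) : Continuous (Fq hs ht) := by
  apply continuous_quot_lift
  apply Continuous.comp continuous_quot_mk
  apply Continuous.subtype_mk
  apply Continuous.prodMk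
  · exact Complex.continuous_ofReal.comp (Real.continuous_sqrt.comp
      (continuous_const.sub (continuous_const.mul
        ((continuous_norm.comp continuous_subtype_val).pow 2))))
  · exact continuous_subtype_val

noncomputable def Fq' (hs : 0 < s) (ht : 0 < t) (q : Quot (ballRelR' s t)) : ↥(UNR s t) :=
  ⟨Fq hs ht q, by
    revert q; apply Quot.ind; intro w
    exact ⟨F0 hs ht w, rfl, F0_fst_ne hs ht w⟩⟩


noncomputable def gmap (x : ellipsoidR s t) : ℂ :=
  expc (-(t / (2 * Real.pi * s)) * Complex.arg (x : ℂ × ℂ).1) * (x : ℂ × ℂ).2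

lemma abs_gmap (x : ellipsoidR s t) : ‖gmap x‖ = ‖(x : ℂ × ℂ).2‖ := by
  rw [gmap, norm_mul, abs_expc, one_mul]

lemma snd_mem_ball (hs : 0 < s) (ht : 0 < t) (x : ellipsoidR s t)
    (hx : (x : ℂ × ℂ).1 ≠ 0) : ‖(x : ℂ × ℂ).2‖ ^ 2 < s := by
  have hE : s * ‖(x : ℂ × ℂ).1‖ ^ 2 + t * ‖(x : ℂ × ℂ).2‖ ^ 2 = s * t := x.2
  have h1 : 0 < ‖(x : ℂ × ℂ).1‖ := norm_pos_iff.mpr hx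
  nlinarith [mul_pos hs (pow_pos h1 2)]

lemma gmap_mem_ball (hs : 0 < s) (ht : 0 < t) (x : ellipsoidR s t)
    (hx : (x : ℂ × ℂ).1 ≠ 0) : gmap x ∈ ballR s := by
  show ‖(_ : ℂ)‖ ^ 2 < s
  rw [abs_gmap]
  exact snd_mem_ball hs ht x hx

/-- The subset of the ellipsoid where the first coordinate is nonzero. -/
def Ezero (s t : ℝ) : Set (ellipsoidR s t) := {x | (x : ℂ × ℂ).1 ≠ 0}

lemma isOpen_Ezero : IsOpen (Ezero s t) :=
  isOpen_compl_singleton.preimage (continuous_fst.comp continuous_subtype_val)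

noncomputable def Ghat (hs : 0 < s) (ht : 0 < t) (x : Ezero s t) : Quot (ballRelR' s t) :=
  Quot.mk _ (⟨gmap x.1, gmap_mem_ball hs ht x.1 x.2⟩ : ballR s)

lemma mk_F0_gmap (hs : 0 < s) (ht : 0 < t) (x : ellipsoidR s t) (hx : (x : ℂ × ℂ).1 ≠ 0) :
    Quot.mk (orbitRelR s t) (F0 hs ht ⟨gmap x, gmap_mem_ball hs ht x hx⟩)
      = Quot.mk (orbitRelR s t) x := by
  apply Quot.sound
  refine ⟨Complex.arg (x : ℂ × ℂ).1 / (2 * Real.pi * s), ?_⟩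
  have hE : s * ‖(x : ℂ × ℂ).1‖ ^ 2 + t * ‖(x : ℂ × ℂ).2‖ ^ 2 = s * t := x.2
  have habs2 : t - t / s * ‖gmap x‖ ^ 2 = ‖(x : ℂ × ℂ).1‖ ^ 2 := by
    rw [abs_gmap]
    field_simp
    nlinarith [hE]
  have hsqrt : Real.sqrt (t - t / s * ‖gmap x‖ ^ 2) = ‖(x : ℂ × ℂ).1‖ := by
    rw [habs2, Real.sqrt_sq (norm_nonneg _)]
  have hexpc : expc (s * (Complex.arg (x : ℂ × ℂ).1 / (2 * Real.pi * s)))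
      = Complex.exp ((Complex.arg (x : ℂ × ℂ).1 : ℂ) * Complex.I) := by
    unfold expc
    congr 1
    push_cast
    have hπ : (Real.pi : ℂ) ≠ 0 := Complex.ofReal_ne_zero.mpr Real.pi_ne_zero
    have hsC : (s : ℂ) ≠ 0 := Complex.ofReal_ne_zero.mpr hs.ne'
    field_simp
  rw [Prod.ext_iff]
  constructor
  · show (x : ℂ × ℂ).1 = _ * ((Real.sqrt _ : ℝ) : ℂ)
    rw [hsqrt, hexpc, mul_comm]
    exact (Complex.norm_mul_exp_arg_mul_I _).symm
  · show (x : ℂ × ℂ).2 = _ * gmap x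
    rw [gmap, ← mul_assoc, ← expc_add,
      show t * (Complex.arg (x : ℂ × ℂ).1 / (2 * Real.pi * s))
          + -(t / (2 * Real.pi * s)) * Complex.arg (x : ℂ × ℂ).1 = 0 by ring,
      expc_zero, one_mul]

lemma expc_shift (hs : 0 < s) (m : ℤ) (B C : ℝ)
    (hBC : C = -(t / (2 * Real.pi * s)) * (B + 2 * Real.pi * m)) (w : ℂ) :
    expc C * w = expc (((-m : ℤ) : ℝ) * (t / s)) * (expc (-(t / (2 * Real.pi * s)) * B) * w) := by
  rw [← mul_assoc, ← expc_add, hBC]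
  congr 2
  push_cast
  field_simp
  ring

lemma Ghat_rel (hs : 0 < s) (ht : 0 < t) (a b : Ezero s t)
    (h : orbitRelR s t a.1 b.1) : Ghat hs ht a = Ghat hs ht b := by
  obtain ⟨θ, hθ⟩ := h
  have hb1 : (b.1 : ℂ × ℂ).1 = expc (s * θ) * (a.1 : ℂ × ℂ).1 := congrArg Prod.fst hθ
  have hb2 : (b.1 : ℂ × ℂ).2 = expc (t * θ) * (a.1 : ℂ × ℂ).2 := congrArg Prod.snd hθ
  obtain ⟨m, hm⟩ := arg_expc_mul (s * θ) a.2
  apply Quot.sound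
  refine ⟨-m, ?_⟩
  show gmap b.1 = expc (((-m : ℤ) : ℝ) * (t / s)) * gmap a.1
  rw [gmap, gmap, hb1, hb2, hm, ← mul_assoc]
  rw [show expc (-(t / (2 * Real.pi * s)) * (2 * Real.pi * (s * θ) + (a.1 : ℂ × ℂ).1.arg + 2 * Real.pi * m))
        * expc (t * θ)
      = expc (-(t / (2 * Real.pi * s)) * (2 * Real.pi * (s * θ) + (a.1 : ℂ × ℂ).1.arg + 2 * Real.pi * m)
              + t * θ) from (expc_add _ _).symm]
  rw [mul_assoc, ← mul_assoc (expc (((-m : ℤ) : ℝ) * (t / s))), ← expc_add]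
  congr 2
  push_cast
  field_simp
  ring

noncomputable def piE (x : Ezero s t) : ↥(UNR s t) :=
  ⟨Quot.mk (orbitRelR s t) x.1, (mk_mem_UNR s t x.1).mpr x.2⟩

lemma piE_surj : Function.Surjective (piE (s := s) (t := t)) := by
  rintro ⟨q, x, hmk, hx⟩
  exact ⟨⟨x, hx⟩, Subtype.ext hmk⟩

lemma piE_cont : Continuous (piE (s := s) (t := t)) :=
  Continuous.subtype_mk (continuous_quot_mk.comp continuous_subtype_val) _

lemma piE_qm : Topology.IsQuotientMap (piE (s := s) (t := t)) := by
  simp_rw [Topology.isQuotientMap_iff, Topology.isCoinducing_iff, and_comm, iff_comm]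
  refine ⟨piE_surj, fun V => ⟨fun hV => hV.preimage piE_cont, fun hV => ?_⟩⟩
  rw [isOpen_induced_iff]
  refine ⟨{q | ∃ hq : q ∈ UNR s t, (⟨q, hq⟩ : ↥(UNR s t)) ∈ V}, ?_, ?_⟩
  · rw [isOpen_coinduced (f := Quot.mk (orbitRelR s t))]
    have hset : (Quot.mk (orbitRelR s t)) ⁻¹' {q | ∃ hq : q ∈ UNR s t, (⟨q, hq⟩ : ↥(UNR s t)) ∈ V}
        = Subtype.val '' (piE ⁻¹' V) := by
      ext x
      constructor
      · rintro ⟨hq, hv⟩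
        have hx : (x : ℂ × ℂ).1 ≠ 0 := (mk_mem_UNR s t x).mp hq
        exact ⟨⟨x, hx⟩, hv, rfl⟩
      · rintro ⟨⟨y, hy⟩, hv, rfl⟩
        exact ⟨(mk_mem_UNR s t y).mpr hy, hv⟩
    rw [hset]
    exact (isOpen_Ezero (s := s) (t := t)).isOpenMap_subtype_val _ hV
  · ext u
    show (∃ hq : ↑u ∈ UNR s t, (⟨↑u, hq⟩ : ↥(UNR s t)) ∈ V) ↔ u ∈ V
    constructor
    · rintro ⟨hq, hv⟩
      rwa [Subtype.coe_eta] at hv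
    · intro hu
      exact ⟨u.2, by rwa [Subtype.coe_eta]⟩


lemma Ghat_cont (hs : 0 < s) (ht : 0 < t) : Continuous (Ghat hs ht) := by
  rw [continuous_iff_continuousAt]
  intro x₀
  have hx₀ : ((x₀.1 : ℂ × ℂ)).1 ≠ 0 := x₀.2
  set z₀ : ℂ := ((x₀.1 : ℂ × ℂ)).1 with hz₀def
  have hG0mem : ∀ x : Ezero s t,
      expc (-(t / (2 * Real.pi * s)) * (((x.1 : ℂ × ℂ).1 / z₀).arg + z₀.arg)) * (x.1 : ℂ × ℂ).2
        ∈ ballR s := by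
    intro x
    show ‖(_ : ℂ)‖ ^ 2 < s
    rw [norm_mul, abs_expc, one_mul]
    exact snd_mem_ball hs ht x.1 x.2
  have heq : Ghat hs ht = fun x : Ezero s t =>
      Quot.mk (ballRelR' s t)
        (⟨expc (-(t / (2 * Real.pi * s)) * (((x.1 : ℂ × ℂ).1 / z₀).arg + z₀.arg))
            * (x.1 : ℂ × ℂ).2, hG0mem x⟩ : ballR s) := by
    funext x
    apply Quot.sound
    obtain ⟨m, hm⟩ := arg_div_add x.2 hx₀
    refine ⟨-m, ?_⟩
    show expc (-(t / (2 * Real.pi * s)) * (((x.1 : ℂ × ℂ).1 / z₀).arg + z₀.arg)) * (x.1 : ℂ × ℂ).2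
        = expc (((-m : ℤ) : ℝ) * (t / s)) * gmap x.1
    rw [gmap]
    exact expc_shift hs m _ _ (by rw [hm]) _
  rw [heq]
  have hz : ContinuousAt (fun x : Ezero s t => (x.1 : ℂ × ℂ).1 / z₀) x₀ :=
    ((continuous_fst.comp (continuous_subtype_val.comp continuous_subtype_val)).div_const
      z₀).continuousAt
  have h1 : ((x₀.1 : ℂ × ℂ).1 / z₀) ∈ Complex.slitPlane := by
    rw [← hz₀def, div_self hx₀]
    exact Complex.one_mem_slitPlane
  have harg : ContinuousAt (fun x : Ezero s t => ((x.1 : ℂ × ℂ).1 / z₀).arg) x₀ :=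
    ContinuousAt.comp (g := Complex.arg) (Complex.continuousAt_arg h1) hz
  have hval : ContinuousAt (fun x : Ezero s t =>
      expc (-(t / (2 * Real.pi * s)) * (((x.1 : ℂ × ℂ).1 / z₀).arg + z₀.arg))
        * (x.1 : ℂ × ℂ).2) x₀ := by
    refine ContinuousAt.mul ?_ ?_
    · exact continuous_expc.continuousAt.comp
        (continuousAt_const.mul (harg.add continuousAt_const))
    · exact (continuous_snd.comp
        (continuous_subtype_val.comp continuous_subtype_val)).continuousAt
  have hsub : ContinuousAt (fun x : Ezero s t =>
      (⟨expc (-(t / (2 * Real.pi * s)) * (((x.1 : ℂ × ℂ).1 / z₀).arg + z₀.arg))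
          * (x.1 : ℂ × ℂ).2, hG0mem x⟩ : ballR s)) x₀ :=
    hval.codRestrict hG0mem
  exact ContinuousAt.comp (g := Quot.mk (ballRelR' s t)) continuous_quot_mk.continuousAt hsub

noncomputable def Ginv (hs : 0 < s) (ht : 0 < t) (u : ↥(UNR s t)) : Quot (ballRelR' s t) :=
  Ghat hs ht (Function.surjInv piE_surj u)

lemma Ghat_fiber (hs : 0 < s) (ht : 0 < t) (a b : Ezero s t) (h : piE a = piE b) :
    Ghat hs ht a = Ghat hs ht b := by
  have hmk : Quot.mk (orbitRelR s t) a.1 = Quot.mk (orbitRelR s t) b.1 :=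
    congrArg Subtype.val h
  exact Ghat_rel hs ht a b ((orbit_equiv s t).eqvGen_iff.mp (Quot.eq.mp hmk))

lemma Ginv_piE (hs : 0 < s) (ht : 0 < t) (x : Ezero s t) :
    Ginv hs ht (piE x) = Ghat hs ht x :=
  Ghat_fiber hs ht _ x (Function.surjInv_eq piE_surj (piE x))

lemma Ginv_cont (hs : 0 < s) (ht : 0 < t) : Continuous (Ginv hs ht) := by
  rw [piE_qm.continuous_iff]
  have : Ginv hs ht ∘ piE = Ghat hs ht := funext (Ginv_piE hs ht)
  rw [this]
  exact Ghat_cont hs ht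

lemma left_inv_aux (hs : 0 < s) (ht : 0 < t) :
    ∀ q : Quot (ballRelR' s t), Ginv hs ht (Fq' hs ht q) = q := by
  apply Quot.ind
  intro w
  have hne : ((F0 hs ht w : ℂ × ℂ)).1 ≠ 0 := F0_fst_ne hs ht w
  have hstep : Fq' hs ht (Quot.mk _ w) = piE ⟨F0 hs ht w, hne⟩ := Subtype.ext rfl
  rw [hstep, Ginv_piE]
  show Quot.mk _ _ = Quot.mk _ w
  have hg : gmap (F0 hs ht w) = (w : ℂ) := by
    rw [gmap]
    show expc (-(t / (2 * Real.pi * s)) * Complex.arg ((Real.sqrt _ : ℝ) : ℂ)) * (w : ℂ) = _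
    rw [Complex.arg_ofReal_of_nonneg (Real.sqrt_nonneg _), mul_zero, expc_zero, one_mul]
  congr 1
  exact Subtype.ext hg

lemma right_inv_aux (hs : 0 < s) (ht : 0 < t) :
    ∀ u : ↥(UNR s t), Fq' hs ht (Ginv hs ht u) = u := by
  intro u
  obtain ⟨x, hx⟩ : ∃ x : Ezero s t, piE x = u := piE_surj u
  rw [← hx, Ginv_piE]
  apply Subtype.ext
  show Quot.mk (orbitRelR s t) (F0 hs ht ⟨gmap x.1, _⟩) = Quot.mk (orbitRelR s t) x.1
  exact mk_F0_gmap hs ht x.1 x.2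

noncomputable def chartHomeo (hs : 0 < s) (ht : 0 < t) :
    Quot (ballRelR' s t) ≃ₜ ↥(UNR s t) where
  toFun := Fq' hs ht
  invFun := Ginv hs ht
  left_inv := left_inv_aux hs ht
  right_inv := right_inv_aux hs ht
  continuous_toFun := Continuous.subtype_mk (Fq_cont hs ht) _
  continuous_invFun := Ginv_cont hs ht


end QSC

/-- For `s, t > 0` with `s/t` irrational, the countable group `Γ_{t/s}` acts on `B(s)` by
complex multiplication, and the map `B(s)/Γ_{t/s} → U_N`, `[w] ↦ [√(t − (t/s)|w|²) : w]`,
is well defined and a homeomorphism (quotient topology on the source, subspace topology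
from the quotient topology on the target). -/

theorem quasisphere_chart_N (s t : ℝ) (hs : 0 < s) (ht : 0 < t)
    (hst : Irrational (s / t)) :
    (∀ w : ℂ, w ∈ ballR s → ∀ k : ℤ, expc ((k : ℝ) * (t / s)) * w ∈ ballR s) ∧
    ∃ h : Quot (ballRelR' s t) ≃ₜ UNR s t,
      ∀ (w : ℂ) (hw : w ∈ ballR s) (x : ellipsoidR s t),
        (x : ℂ × ℂ) = ((Real.sqrt (t - t / s * ‖w‖ ^ 2) : ℂ), w) →
          (h (Quot.mk (ballRelR' s t) ⟨w, hw⟩) : Quot (orbitRelR s t)) =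
            Quot.mk (orbitRelR s t) x := by
  constructor
  · intro w hw k
    show ‖(_ : ℂ)‖ ^ 2 < s
    rw [norm_mul, QSC.abs_expc, one_mul]
    exact hw
  · refine ⟨QSC.chartHomeo hs ht, ?_⟩
    intro w hw x hx
    have hF0 : QSC.F0 hs ht ⟨w, hw⟩ = x := Subtype.ext hx.symm
    have h1 : (QSC.chartHomeo hs ht (Quot.mk (ballRelR' s t) ⟨w, hw⟩) : Quot (orbitRelR s t))
        = Quot.mk (orbitRelR s t) (QSC.F0 hs ht ⟨w, hw⟩) := rfl
    rw [h1, hF0]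
end
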